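/- (Excessive power reduction) If γ > 0 and either α > 1 (with any ε > 0) or ε > 1 (with any α > 0), then lim_{M→∞} R̃_i(M) = 0. -/

import Mathlib

open Real Filter Topology Finset

noncomputable section

/-- `η = τ·p_p·β/(1+τ·p_p·β)`. -/
def etaP (τ pp β : ℝ) : ℝ := τ * pp * β / (1 + τ * pp * β)

/-- `ω = β(K+η)/(K+1)`. -/
def omegaP (τ pp β K : ℝ) : ℝ := β * (K + etaP τ pp β) / (K + 1)

/-- `σ² = β/((1+τ·p_p·β)(K+1))`. -/
def sigma2P (τ pp β K : ℝ) : ℝ := β / ((1 + τ * pp * β) * (K + 1))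

/-- Generic interference coefficient: with `(b₁,k₁)` and `(b₂,k₂)` the two links involved,
`b₁·b₂/((k₁+1)(k₂+1))·[(k₁+η₁)/(1+τ·p_p·b₂) + k₂·η₁ + k₁·η₂ + η₁·η₂]`.
It specializes to `ξ_{XR,ij}`, `χ_{XR,ij}` and `ζ_{XR,ij}` of (25)–(27). -/
def xiP (τ pp b1 k1 b2 k2 : ℝ) : ℝ :=
  b1 * b2 / ((k1 + 1) * (k2 + 1)) *
    ((k1 + etaP τ pp b1) / (1 + τ * pp * b2) + k2 * etaP τ pp b1
      + k1 * etaP τ pp b2 + etaP τ pp b1 * etaP τ pp b2)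

variable {N : ℕ}

/-- `q_i = p_u σ²_{AR,i} + p_u σ²_{BR,i} + 1`. -/
def qP (τ pp pu : ℝ) (βA βB KA KB : Fin N → ℝ) (i : Fin N) : ℝ :=
  pu * sigma2P τ pp (βA i) (KA i) + pu * sigma2P τ pp (βB i) (KB i) + 1

/-- `Q_i = Σ_{j≠i} p_u·(ξ_{AR,ij}+ξ_{BR,ij}+χ_{AR,ij}+χ_{BR,ij})`. -/
def QP (τ pp pu : ℝ) (βA βB KA KB : Fin N → ℝ) (i : Fin N) : ℝ :=
  ∑ j ∈ Finset.univ \ {i},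
    pu * (xiP τ pp (βA i) (KA i) (βA j) (KA j) + xiP τ pp (βB i) (KB i) (βA j) (KA j)
      + xiP τ pp (βA i) (KA i) (βB j) (KB j) + xiP τ pp (βB i) (KB i) (βB j) (KB j))

/-- `Z_{ij} = p_r·(ζ_{AR,ij}+ζ_{BR,ij})`. -/
def ZP (τ pp pr : ℝ) (βA βB KA KB : Fin N → ℝ) (i j : Fin N) : ℝ :=
  pr * (xiP τ pp (βA j) (KA j) (βA i) (KA i) + xiP τ pp (βB j) (KB j) (βA i) (KA i))

/-- `R̃_{1,i}(M)` of Theorem 1 (uplink phase). -/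
def R1P (lam τ pp pu : ℝ) (βA βB KA KB : Fin N → ℝ) (i : Fin N) (M : ℝ) : ℝ :=
  lam * logb 2 (1 +
    (M * pu * (omegaP τ pp (βA i) (KA i)) ^ 2 + M * pu * (omegaP τ pp (βB i) (KB i)) ^ 2)
      / ((omegaP τ pp (βA i) (KA i) + omegaP τ pp (βB i) (KB i)) * qP τ pp pu βA βB KA KB i
          + QP τ pp pu βA βB KA KB i))

/-- `R̃_{AR,i}(M)` of Theorem 1. -/
def RARP (lam τ pp pu : ℝ) (βA βB KA KB : Fin N → ℝ) (i : Fin N) (M : ℝ) : ℝ :=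
  lam * logb 2 (1 + M * pu * (omegaP τ pp (βA i) (KA i)) ^ 2
      / ((omegaP τ pp (βA i) (KA i) + omegaP τ pp (βB i) (KB i)) * qP τ pp pu βA βB KA KB i
          + QP τ pp pu βA βB KA KB i))

/-- `R̃_{BR,i}(M)` of Theorem 1. -/
def RBRP (lam τ pp pu : ℝ) (βA βB KA KB : Fin N → ℝ) (i : Fin N) (M : ℝ) : ℝ :=
  lam * logb 2 (1 + M * pu * (omegaP τ pp (βB i) (KB i)) ^ 2
      / ((omegaP τ pp (βA i) (KA i) + omegaP τ pp (βB i) (KB i)) * qP τ pp pu βA βB KA KB i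
          + QP τ pp pu βA βB KA KB i))

/-- `R̃_{RA,i}(M)` of Theorem 1 (downlink to `U_{A,i}`). -/
def RRAP (lam τ pp pr : ℝ) (βA βB KA KB : Fin N → ℝ) (i : Fin N) (M : ℝ) : ℝ :=
  lam * logb 2 (1 + M * pr * (omegaP τ pp (βA i) (KA i)) ^ 2
      / (∑ j, (omegaP τ pp (βA j) (KA j) + omegaP τ pp (βB j) (KB j)
          + ZP τ pp pr βA βB KA KB i j)))

/-- `R̃_{RB,i}(M)` of Theorem 1 (downlink to `U_{B,i}`). -/
def RRBP (lam τ pp pr : ℝ) (βA βB KA KB : Fin N → ℝ) (i : Fin N) (M : ℝ) : ℝ :=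
  lam * logb 2 (1 + M * pr * (omegaP τ pp (βB i) (KB i)) ^ 2
      / (∑ j, (omegaP τ pp (βA j) (KA j) + omegaP τ pp (βB j) (KB j)
          + ZP τ pp pr βA βB KA KB i j)))

/-- `R̃_{2,i}(M) = min(R̃_{AR,i}, R̃_{RB,i}) + min(R̃_{BR,i}, R̃_{RA,i})`. -/
def R2P (lam τ pp pu pr : ℝ) (βA βB KA KB : Fin N → ℝ) (i : Fin N) (M : ℝ) : ℝ :=
  min (RARP lam τ pp pu βA βB KA KB i M) (RRBP lam τ pp pr βA βB KA KB i M)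
    + min (RBRP lam τ pp pu βA βB KA KB i M) (RRAP lam τ pp pr βA βB KA KB i M)

/-- `R̃_i(M) = min(R̃_{1,i}(M), R̃_{2,i}(M))`. -/
def RtotP (lam τ pp pu pr : ℝ) (βA βB KA KB : Fin N → ℝ) (i : Fin N) (M : ℝ) : ℝ :=
  min (R1P lam τ pp pu βA βB KA KB i M) (R2P lam τ pp pu pr βA βB KA KB i M)

end
section MyHelpers

variable {ι : Type*} {l : Filter ι}

lemma my_etaP_nonneg {τ pp β : ℝ} (hτ : 0 < τ) (hpp : 0 ≤ pp) (hβ : 0 < β) :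
    0 ≤ etaP τ pp β := by
  unfold etaP; positivity

lemma my_omegaP_nonneg {τ pp β K : ℝ} (hτ : 0 < τ) (hpp : 0 ≤ pp) (hβ : 0 < β) (hK : 0 < K) :
    0 ≤ omegaP τ pp β K := by
  have h := my_etaP_nonneg hτ hpp hβ
  unfold omegaP; positivity

lemma my_sigma2P_nonneg {τ pp β K : ℝ} (hτ : 0 < τ) (hpp : 0 ≤ pp) (hβ : 0 < β) (hK : 0 < K) :
    0 ≤ sigma2P τ pp β K := by
  unfold sigma2P; positivity

lemma my_xiP_nonneg {τ pp b1 k1 b2 k2 : ℝ} (hτ : 0 < τ) (hpp : 0 ≤ pp)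
    (hb1 : 0 < b1) (hk1 : 0 < k1) (hb2 : 0 < b2) (hk2 : 0 < k2) :
    0 ≤ xiP τ pp b1 k1 b2 k2 := by
  have h1 := my_etaP_nonneg (β := b1) hτ hpp hb1
  have h2 := my_etaP_nonneg (β := b2) hτ hpp hb2
  unfold xiP; positivity

lemma my_etaP_tendsto {f : ι → ℝ} (hf : Tendsto f l (𝓝 0)) (τ β : ℝ) :
    Tendsto (fun x => etaP τ (f x) β) l (𝓝 0) := by
  unfold etaP
  have hnum : Tendsto (fun x => τ * f x * β) l (𝓝 0) := by
    simpa using (hf.const_mul τ).mul_const β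
  have hden : Tendsto (fun x => 1 + τ * f x * β) l (𝓝 1) := by
    simpa using hnum.const_add 1
  have := hnum.div hden one_ne_zero
  rw [zero_div] at this
  exact this

lemma my_omegaP_tendsto {f : ι → ℝ} (hf : Tendsto f l (𝓝 0)) (τ β K : ℝ) :
    Tendsto (fun x => omegaP τ (f x) β K) l (𝓝 (β * K / (K + 1))) := by
  unfold omegaP
  simpa using (((my_etaP_tendsto hf τ β).const_add K).const_mul β).div_const (K + 1)

lemma my_sigma2P_tendsto {f : ι → ℝ} (hf : Tendsto f l (𝓝 0)) (τ β K : ℝ) (hK : 0 < K) :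
    Tendsto (fun x => sigma2P τ (f x) β K) l (𝓝 (β / (K + 1))) := by
  unfold sigma2P
  have hden : Tendsto (fun x => (1 + τ * f x * β) * (K + 1)) l (𝓝 (K + 1)) := by
    simpa using (((hf.const_mul τ).mul_const β).const_add 1).mul_const (K + 1)
  exact (tendsto_const_nhds (x := β)).div hden (by positivity)

lemma my_xiP_tendsto {f : ι → ℝ} (hf : Tendsto f l (𝓝 0)) (τ b1 k1 b2 k2 : ℝ) :
    ∃ X : ℝ, Tendsto (fun x => xiP τ (f x) b1 k1 b2 k2) l (𝓝 X) := by
  have h1 := my_etaP_tendsto hf τ b1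
  have h2 := my_etaP_tendsto hf τ b2
  have hd : Tendsto (fun x => 1 + τ * f x * b2) l (𝓝 1) := by
    simpa using ((hf.const_mul τ).mul_const b2).const_add 1
  exact ⟨_, by
    unfold xiP
    exact (((((h1.const_add k1).div hd one_ne_zero).add (h1.const_mul k2)).add
      (h2.const_mul k1)).add (h1.mul h2)).const_mul (b1 * b2 / ((k1 + 1) * (k2 + 1)))⟩

end MyHelpers

/-- Excessive power reduction: if `γ > 0` and either `α > 1` (with any
`ε > 0`) or `ε > 1` (with any `α > 0`), then `R̃_i(M) → 0` as `M → ∞`. -/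
theorem power_scaling_excessive
    (N : ℕ) (hN : 1 ≤ N) (i : Fin N) (T τ : ℝ) (hτ : 0 < τ) (hT : τ < T)
    (lam : ℝ) (hlam : lam = (T - τ) / (2 * T))
    (Eu Er Ep : ℝ) (hEu : 0 < Eu) (hEr : 0 < Er) (hEp : 0 < Ep)
    (βA βB KA KB : Fin N → ℝ)
    (hβA : ∀ j, 0 < βA j) (hβB : ∀ j, 0 < βB j)
    (hKA : ∀ j, 0 < KA j) (hKB : ∀ j, 0 < KB j)
    (α ε γ : ℝ) (hγ : 0 < γ)
    (hcase : (1 < α ∧ 0 < ε) ∨ (0 < α ∧ 1 < ε)) :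
    Tendsto (fun M : ℕ =>
        RtotP lam τ (Ep / (M : ℝ) ^ γ) (Eu / (M : ℝ) ^ α) (Er / (M : ℝ) ^ ε)
          βA βB KA KB i (M : ℝ))
      atTop (𝓝 0) := by
  classical
  let pp : ℕ → ℝ := fun M => Ep / (M : ℝ) ^ γ
  let pu : ℕ → ℝ := fun M => Eu / (M : ℝ) ^ α
  let pr : ℕ → ℝ := fun M => Er / (M : ℝ) ^ ε
  show Tendsto (fun M : ℕ =>
      RtotP lam τ (pp M) (pu M) (pr M) βA βB KA KB i (M : ℝ)) atTop (𝓝 0)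
  have hα : 0 < α := by rcases hcase with ⟨h, _⟩ | ⟨h, _⟩ <;> linarith
  have hε : 0 < ε := by rcases hcase with ⟨_, h⟩ | ⟨_, h⟩ <;> linarith
  have hcast : Tendsto (fun M : ℕ => (M : ℝ)) atTop atTop := tendsto_natCast_atTop_atTop
  have hrpowTop : ∀ {δ : ℝ}, 0 < δ →
      Tendsto (fun M : ℕ => (M : ℝ) ^ δ) atTop atTop := fun hδ =>
    (tendsto_rpow_atTop hδ).comp hcast
  have hpp : Tendsto pp atTop (𝓝 0) := (hrpowTop hγ).const_div_atTop Ep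
  have hpu : Tendsto pu atTop (𝓝 0) := (hrpowTop hα).const_div_atTop Eu
  have hpr : Tendsto pr atTop (𝓝 0) := (hrpowTop hε).const_div_atTop Er
  have hpp0 : ∀ M : ℕ, 0 ≤ pp M := fun M =>
    div_nonneg hEp.le (Real.rpow_nonneg (Nat.cast_nonneg M) γ)
  have hpu0 : ∀ M : ℕ, 0 ≤ pu M := fun M =>
    div_nonneg hEu.le (Real.rpow_nonneg (Nat.cast_nonneg M) α)
  have hpr0 : ∀ M : ℕ, 0 ≤ pr M := fun M =>
    div_nonneg hEr.le (Real.rpow_nonneg (Nat.cast_nonneg M) ε)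
  have hT0 : 0 < T := hτ.trans hT
  have hlam0 : 0 < lam := by rw [hlam]; apply div_pos <;> linarith
  -- limits of building blocks
  have hωA := my_omegaP_tendsto hpp τ (βA i) (KA i)
  have hωB := my_omegaP_tendsto hpp τ (βB i) (KB i)
  have hσA := my_sigma2P_tendsto hpp τ (βA i) (KA i) (hKA i)
  have hσB := my_sigma2P_tendsto hpp τ (βB i) (KB i) (hKB i)
  have hq : Tendsto (fun M => qP τ (pp M) (pu M) βA βB KA KB i) atTop (𝓝 1) := by
    simp only [qP]
    simpa using ((hpu.mul hσA).add (hpu.mul hσB)).add_const 1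
  have hQ : Tendsto (fun M => QP τ (pp M) (pu M) βA βB KA KB i) atTop (𝓝 0) := by
    simp only [QP]
    have hterm : ∀ j ∈ Finset.univ \ {i},
        Tendsto (fun M => pu M *
          (xiP τ (pp M) (βA i) (KA i) (βA j) (KA j)
            + xiP τ (pp M) (βB i) (KB i) (βA j) (KA j)
            + xiP τ (pp M) (βA i) (KA i) (βB j) (KB j)
            + xiP τ (pp M) (βB i) (KB i) (βB j) (KB j))) atTop (𝓝 0) := by
      intro j _
      obtain ⟨X1, h1⟩ := my_xiP_tendsto hpp τ (βA i) (KA i) (βA j) (KA j)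
      obtain ⟨X2, h2⟩ := my_xiP_tendsto hpp τ (βB i) (KB i) (βA j) (KA j)
      obtain ⟨X3, h3⟩ := my_xiP_tendsto hpp τ (βA i) (KA i) (βB j) (KB j)
      obtain ⟨X4, h4⟩ := my_xiP_tendsto hpp τ (βB i) (KB i) (βB j) (KB j)
      simpa using hpu.mul (((h1.add h2).add h3).add h4)
    simpa using tendsto_finset_sum _ hterm
  have hden1 : Tendsto (fun M =>
      (omegaP τ (pp M) (βA i) (KA i) + omegaP τ (pp M) (βB i) (KB i))
        * qP τ (pp M) (pu M) βA βB KA KB i + QP τ (pp M) (pu M) βA βB KA KB i)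
      atTop (𝓝 (βA i * KA i / (KA i + 1) + βB i * KB i / (KB i + 1))) := by
    simpa using ((hωA.add hωB).mul hq).add hQ
  have hD : 0 < βA i * KA i / (KA i + 1) + βB i * KB i / (KB i + 1) := by
    have h1 := hβA i; have h2 := hβB i; have h3 := hKA i; have h4 := hKB i
    positivity
  have hden2 : Tendsto (fun M => ∑ j, (omegaP τ (pp M) (βA j) (KA j)
        + omegaP τ (pp M) (βB j) (KB j) + ZP τ (pp M) (pr M) βA βB KA KB i j))
      atTop (𝓝 (∑ j, (βA j * KA j / (KA j + 1) + βB j * KB j / (KB j + 1) + 0))) := by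
    refine tendsto_finset_sum _ (fun j _ => ?_)
    have hωAj := my_omegaP_tendsto hpp τ (βA j) (KA j)
    have hωBj := my_omegaP_tendsto hpp τ (βB j) (KB j)
    obtain ⟨X1, h1⟩ := my_xiP_tendsto hpp τ (βA j) (KA j) (βA i) (KA i)
    obtain ⟨X2, h2⟩ := my_xiP_tendsto hpp τ (βB j) (KB j) (βA i) (KA i)
    have hZj : Tendsto (fun M => ZP τ (pp M) (pr M) βA βB KA KB i j) atTop (𝓝 0) := by
      simp only [ZP]
      simpa using hpr.mul (h1.add h2)
    exact (hωAj.add hωBj).add hZj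
  have hS : 0 < ∑ j, (βA j * KA j / (KA j + 1) + βB j * KB j / (KB j + 1) + 0) := by
    refine Finset.sum_pos (fun j _ => ?_) ⟨i, Finset.mem_univ i⟩
    have h1 := hβA j; have h2 := hβB j; have h3 := hKA j; have h4 := hKB j
    positivity
  -- pointwise nonnegativity
  have hrate : ∀ x : ℝ, 0 ≤ x → 0 ≤ lam * Real.logb 2 (1 + x) := fun x hx =>
    mul_nonneg hlam0.le (Real.logb_nonneg one_lt_two (by linarith))
  have hnnA : ∀ (M : ℕ) (j : Fin N), 0 ≤ omegaP τ (pp M) (βA j) (KA j) := fun M j =>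
    my_omegaP_nonneg hτ (hpp0 M) (hβA j) (hKA j)
  have hnnB : ∀ (M : ℕ) (j : Fin N), 0 ≤ omegaP τ (pp M) (βB j) (KB j) := fun M j =>
    my_omegaP_nonneg hτ (hpp0 M) (hβB j) (hKB j)
  have hqnn : ∀ M : ℕ, 0 ≤ qP τ (pp M) (pu M) βA βB KA KB i := by
    intro M
    have hsA := my_sigma2P_nonneg hτ (hpp0 M) (hβA i) (hKA i)
    have hsB := my_sigma2P_nonneg hτ (hpp0 M) (hβB i) (hKB i)
    simp only [qP]
    exact add_nonneg (add_nonneg (mul_nonneg (hpu0 M) hsA) (mul_nonneg (hpu0 M) hsB))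
      one_pos.le
  have hQnn : ∀ M : ℕ, 0 ≤ QP τ (pp M) (pu M) βA βB KA KB i := by
    intro M
    refine Finset.sum_nonneg (fun j _ => mul_nonneg (hpu0 M) ?_)
    exact add_nonneg (add_nonneg (add_nonneg
      (my_xiP_nonneg hτ (hpp0 M) (hβA i) (hKA i) (hβA j) (hKA j))
      (my_xiP_nonneg hτ (hpp0 M) (hβB i) (hKB i) (hβA j) (hKA j)))
      (my_xiP_nonneg hτ (hpp0 M) (hβA i) (hKA i) (hβB j) (hKB j)))
      (my_xiP_nonneg hτ (hpp0 M) (hβB i) (hKB i) (hβB j) (hKB j))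
  have hZnn : ∀ (M : ℕ) (j : Fin N), 0 ≤ ZP τ (pp M) (pr M) βA βB KA KB i j := by
    intro M j
    refine mul_nonneg (hpr0 M) (add_nonneg ?_ ?_)
    · exact my_xiP_nonneg hτ (hpp0 M) (hβA j) (hKA j) (hβA i) (hKA i)
    · exact my_xiP_nonneg hτ (hpp0 M) (hβB j) (hKB j) (hβA i) (hKA i)
  have hden1nn : ∀ M : ℕ, 0 ≤ (omegaP τ (pp M) (βA i) (KA i)
      + omegaP τ (pp M) (βB i) (KB i)) * qP τ (pp M) (pu M) βA βB KA KB i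
      + QP τ (pp M) (pu M) βA βB KA KB i := fun M =>
    add_nonneg (mul_nonneg (add_nonneg (hnnA M i) (hnnB M i)) (hqnn M)) (hQnn M)
  have hden2nn : ∀ M : ℕ, 0 ≤ ∑ j, (omegaP τ (pp M) (βA j) (KA j)
      + omegaP τ (pp M) (βB j) (KB j) + ZP τ (pp M) (pr M) βA βB KA KB i j) := fun M =>
    Finset.sum_nonneg (fun j _ => add_nonneg (add_nonneg (hnnA M j) (hnnB M j)) (hZnn M j))
  have hnum0 : ∀ (M : ℕ) (p ω : ℝ), 0 ≤ p → 0 ≤ (M : ℝ) * p * ω ^ 2 := fun M p ω hp =>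
    mul_nonneg (mul_nonneg (Nat.cast_nonneg M) hp) (sq_nonneg ω)
  have hR1nn : ∀ M : ℕ, 0 ≤ R1P lam τ (pp M) (pu M) βA βB KA KB i (M : ℝ) := by
    intro M; simp only [R1P]
    exact hrate _ (div_nonneg (add_nonneg (hnum0 M _ _ (hpu0 M)) (hnum0 M _ _ (hpu0 M)))
      (hden1nn M))
  have hRARnn : ∀ M : ℕ, 0 ≤ RARP lam τ (pp M) (pu M) βA βB KA KB i (M : ℝ) := by
    intro M; simp only [RARP]
    exact hrate _ (div_nonneg (hnum0 M _ _ (hpu0 M)) (hden1nn M))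
  have hRBRnn : ∀ M : ℕ, 0 ≤ RBRP lam τ (pp M) (pu M) βA βB KA KB i (M : ℝ) := by
    intro M; simp only [RBRP]
    exact hrate _ (div_nonneg (hnum0 M _ _ (hpu0 M)) (hden1nn M))
  have hRRAnn : ∀ M : ℕ, 0 ≤ RRAP lam τ (pp M) (pr M) βA βB KA KB i (M : ℝ) := by
    intro M; simp only [RRAP]
    exact hrate _ (div_nonneg (hnum0 M _ _ (hpr0 M)) (hden2nn M))
  have hRRBnn : ∀ M : ℕ, 0 ≤ RRBP lam τ (pp M) (pr M) βA βB KA KB i (M : ℝ) := by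
    intro M; simp only [RRBP]
    exact hrate _ (div_nonneg (hnum0 M _ _ (hpr0 M)) (hden2nn M))
  have hRtotnn : ∀ M : ℕ,
      0 ≤ RtotP lam τ (pp M) (pu M) (pr M) βA βB KA KB i (M : ℝ) := by
    intro M
    simp only [RtotP, R2P]
    exact le_min (hR1nn M) (add_nonneg (le_min (hRARnn M) (hRRBnn M))
      (le_min (hRBRnn M) (hRRAnn M)))
  -- the log-rate helper
  have hlogHelp : ∀ {g : ℕ → ℝ}, Tendsto g atTop (𝓝 0) →
      Tendsto (fun M => lam * Real.logb 2 (1 + g M)) atTop (𝓝 0) := by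
    intro g hg
    have h1 : Tendsto (fun M => 1 + g M) atTop (𝓝 1) := by simpa using hg.const_add 1
    have h2 : Tendsto (fun M => Real.logb 2 (1 + g M)) atTop (𝓝 (Real.logb 2 1)) :=
      (Real.continuousAt_logb one_ne_zero).tendsto.comp h1
    rw [Real.logb_one] at h2
    simpa using h2.const_mul lam
  -- helper for M * (E / M^δ) → 0 when δ > 1
  have hME : ∀ (E δ : ℝ), 0 < E → 1 < δ →
      Tendsto (fun M : ℕ => (M : ℝ) * (E / (M : ℝ) ^ δ)) atTop (𝓝 0) := by
    intro E δ hE hδ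
    have hev : ∀ᶠ M : ℕ in atTop,
        (fun M : ℕ => E / (M : ℝ) ^ (δ - 1)) M
          = (fun M : ℕ => (M : ℝ) * (E / (M : ℝ) ^ δ)) M := by
      filter_upwards [eventually_ge_atTop 1] with M hM
      have hM0 : (0 : ℝ) < M := by exact_mod_cast Nat.lt_of_lt_of_le Nat.zero_lt_one hM
      have hMδ : (M : ℝ) ^ δ = (M : ℝ) ^ (δ - 1) * M := by
        rw [← Real.rpow_add_one hM0.ne' (δ - 1), sub_add_cancel]
      have h1 : (M : ℝ) ^ (δ - 1) ≠ 0 := (Real.rpow_pos_of_pos hM0 _).ne'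
      have h2 : (M : ℝ) ^ δ ≠ 0 := (Real.rpow_pos_of_pos hM0 _).ne'
      field_simp [hMδ]
      rw [hMδ, sub_eq_neg_add]
    exact Tendsto.congr' hev ((hrpowTop (by linarith)).const_div_atTop E)
  rcases hcase with ⟨hα1, -⟩ | ⟨-, hε1⟩
  · -- α > 1 : uplink rate R1 → 0
    have hMpu : Tendsto (fun M : ℕ => (M : ℝ) * pu M) atTop (𝓝 0) := hME Eu α hEu hα1
    have hnum1 : Tendsto (fun M : ℕ =>
        (M : ℝ) * pu M * omegaP τ (pp M) (βA i) (KA i) ^ 2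
          + (M : ℝ) * pu M * omegaP τ (pp M) (βB i) (KB i) ^ 2) atTop (𝓝 0) := by
      simpa using (hMpu.mul (hωA.pow 2)).add (hMpu.mul (hωB.pow 2))
    have hR1 : Tendsto (fun M : ℕ =>
        R1P lam τ (pp M) (pu M) βA βB KA KB i (M : ℝ)) atTop (𝓝 0) := by
      simp only [R1P]
      refine hlogHelp ?_
      have := hnum1.div hden1 hD.ne'
      rw [zero_div] at this
      exact this
    refine tendsto_of_tendsto_of_tendsto_of_le_of_le tendsto_const_nhds hR1
      (fun M => hRtotnn M) (fun M => ?_)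
    simp only [RtotP]
    exact min_le_left _ _
  · -- ε > 1 : downlink rates → 0
    have hMpr : Tendsto (fun M : ℕ => (M : ℝ) * pr M) atTop (𝓝 0) := hME Er ε hEr hε1
    have hRRA : Tendsto (fun M : ℕ =>
        RRAP lam τ (pp M) (pr M) βA βB KA KB i (M : ℝ)) atTop (𝓝 0) := by
      simp only [RRAP]
      refine hlogHelp ?_
      have := (hMpr.mul (hωA.pow 2)).div hden2 hS.ne'
      rw [zero_mul, zero_div] at this
      exact this
    have hRRB : Tendsto (fun M : ℕ =>
        RRBP lam τ (pp M) (pr M) βA βB KA KB i (M : ℝ)) atTop (𝓝 0) := by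
      simp only [RRBP]
      refine hlogHelp ?_
      have := (hMpr.mul (hωB.pow 2)).div hden2 hS.ne'
      rw [zero_mul, zero_div] at this
      exact this
    have hbound : Tendsto (fun M : ℕ =>
        RRBP lam τ (pp M) (pr M) βA βB KA KB i (M : ℝ)
          + RRAP lam τ (pp M) (pr M) βA βB KA KB i (M : ℝ)) atTop (𝓝 0) := by
      simpa using hRRB.add hRRA
    refine tendsto_of_tendsto_of_tendsto_of_le_of_le tendsto_const_nhds hbound
      (fun M => hRtotnn M) (fun M => ?_)
    simp only [RtotP, R2P]
    exact le_trans (min_le_right _ _)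
      (add_le_add (min_le_right _ _) (min_le_right _ _))
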